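/- Let K = K¹ ⊔_σ K² be a wedge-decomposable simplicial complex on [m] with no ghost vertices, let ρ = V(K¹), τ = V(K²), and L = ⟨ρ⟩ ⊔_σ ⟨τ⟩. Then for each non-empty J ⊆ [m] and each n ≥ 0 the sequence H̃_n(⟨σ⟩_J) →φ H̃_n(K¹_J) ⊕ H̃_n(K²_J) →ψ H̃_n(K_J) →Φ H̃_n(L_J) → 0 is exact, where φ(z) = (z̄, −z̄) (images under the maps induced by the inclusions of ⟨σ⟩_J into K¹_J and K²_J), ψ(x, y) is the sum of the images of x and y in H̃_n(K_J), and Φ is induced by the inclusion K_J ↪ L_J. -/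

import Mathlib

set_option maxHeartbeats 1000000
set_option synthInstance.maxHeartbeats 1000000

open scoped DirectSum

namespace DH

/-- An abstract simplicial complex on the finite (totally ordered) vertex set `S ⊆ ℕ`:
a collection of subsets of `S` containing `∅` and closed under taking subsets. -/
structure SComplex (S : Finset ℕ) : Type where
  faces : Set (Finset ℕ)
  empty_mem : ∅ ∈ faces
  faces_subset : ∀ ⦃σ : Finset ℕ⦄, σ ∈ faces → σ ⊆ S
  down_closed : ∀ ⦃σ τ : Finset ℕ⦄, σ ∈ faces → τ ⊆ σ → τ ∈ faces

variable {S : Finset ℕ}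

/-- `K` has no ghost vertices: every vertex of `S` is a face. -/
def NoGhosts (K : SComplex S) : Prop := ∀ x ∈ S, ({x} : Finset ℕ) ∈ K.faces

/-- The full subcomplex `K_J = {σ ∩ J : σ ∈ K}`. -/
def SComplex.restrict (K : SComplex S) (J : Finset ℕ) : SComplex S where
  faces := {τ | ∃ σ ∈ K.faces, τ = σ ∩ J}
  empty_mem := ⟨∅, K.empty_mem, by simp⟩
  faces_subset := by
    rintro τ ⟨σ, hσ, rfl⟩
    exact Finset.inter_subset_left.trans (K.faces_subset hσ)
  down_closed := by
    rintro σ' τ ⟨σ, hσ, rfl⟩ hτ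
    refine ⟨τ, K.down_closed hσ (hτ.trans Finset.inter_subset_left), ?_⟩
    exact (Finset.inter_eq_left.mpr (hτ.trans Finset.inter_subset_right)).symm

/-- The full simplex `⟨ρ⟩` on a vertex set `ρ ⊆ S`, viewed as a complex on `S`. -/
def simplexOn (ρ : Finset ℕ) (h : ρ ⊆ S) : SComplex S where
  faces := {τ | τ ⊆ ρ}
  empty_mem := Finset.empty_subset ρ
  faces_subset := fun _ hσ => hσ.trans h
  down_closed := fun _ _ hσ hτ => hτ.trans hσ

/-- Union of two simplicial complexes on the same vertex set. -/
def SComplex.union (K1 K2 : SComplex S) : SComplex S where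
  faces := K1.faces ∪ K2.faces
  empty_mem := Or.inl K1.empty_mem
  faces_subset := by
    rintro σ (h | h)
    exacts [K1.faces_subset h, K2.faces_subset h]
  down_closed := by
    rintro σ τ (h | h) hτ
    exacts [Or.inl (K1.down_closed h hτ), Or.inr (K2.down_closed h hτ)]

/-- `K = K¹ ⊔_σ K²` : `K` is the face sum of `K¹` and `K²` along the
(possibly empty) face `σ`, which is a proper face of both. -/
structure IsFaceSum (K K1 K2 : SComplex S) (σ : Finset ℕ) : Prop where
  union : K.faces = K1.faces ∪ K2.faces
  inter : K1.faces ∩ K2.faces = {τ : Finset ℕ | τ ⊆ σ}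
  mem1 : σ ∈ K1.faces
  mem2 : σ ∈ K2.faces
  proper1 : K1.faces ≠ {τ : Finset ℕ | τ ⊆ σ}
  proper2 : K2.faces ≠ {τ : Finset ℕ | τ ⊆ σ}

/-- `K` is wedge-decomposable if it is a face sum `K¹ ⊔_σ K²`. -/
def WedgeDecomposable (K : SComplex S) : Prop :=
  ∃ K1 K2 : SComplex S, ∃ σ : Finset ℕ, IsFaceSum K K1 K2 σ

lemma IsFaceSum.le1 {K K1 K2 : SComplex S} {σ : Finset ℕ} (h : IsFaceSum K K1 K2 σ) :
    K1.faces ⊆ K.faces := h.union ▸ Set.subset_union_left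

lemma IsFaceSum.le2 {K K1 K2 : SComplex S} {σ : Finset ℕ} (h : IsFaceSum K K1 K2 σ) :
    K2.faces ⊆ K.faces := h.union ▸ Set.subset_union_right

open Classical in
/-- The effective vertex set `V(K)`: the set of non-ghost vertices. -/
noncomputable def effVerts (K : SComplex S) : Finset ℕ :=
  S.filter (fun x => ({x} : Finset ℕ) ∈ K.faces)

open Classical in
/-- The set of ghost vertices of `K`. -/
noncomputable def ghostVerts (K : SComplex S) : Finset ℕ :=
  S.filter (fun x => ({x} : Finset ℕ) ∉ K.faces)

open Classical in
lemma effVerts_subset (K : SComplex S) : effVerts K ⊆ S := Finset.filter_subset _ _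

open Classical in
lemma face_subset_effVerts (K : SComplex S) {σ : Finset ℕ} (h : σ ∈ K.faces) :
    σ ⊆ effVerts K := by
  intro x hx
  rw [effVerts, Finset.mem_filter]
  exact ⟨K.faces_subset h hx, K.down_closed h (Finset.singleton_subset_iff.mpr hx)⟩

/-- `L = ⟨V(K¹)⟩ ⊔_σ ⟨V(K²)⟩`, the face sum of the full simplices on the
effective vertex sets. -/
noncomputable def wedgeL (K1 K2 : SComplex S) : SComplex S :=
  (simplexOn (effVerts K1) (effVerts_subset K1)).union
    (simplexOn (effVerts K2) (effVerts_subset K2))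

lemma le_wedgeL {K K1 K2 : SComplex S} {σ : Finset ℕ} (h : IsFaceSum K K1 K2 σ) :
    K.faces ⊆ (wedgeL K1 K2).faces := by
  intro τ hτ
  rw [h.union] at hτ
  rcases hτ with hτ | hτ
  · exact Or.inl (face_subset_effVerts K1 hτ)
  · exact Or.inr (face_subset_effVerts K2 hτ)

/-! ### Reduced simplicial homology (augmented, ℤ coefficients) -/

/-- Faces of `K` with `k` vertices (so of dimension `k - 1`). -/
abbrev Face (K : SComplex S) (k : ℤ) : Type :=
  {σ : Finset ℕ // σ ∈ K.faces ∧ (σ.card : ℤ) = k}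

/-- The group of augmented simplicial `ℤ`-chains of `K` spanned by faces with `k`
vertices (this is the chain group in homological degree `k - 1`; for `k = 0` it is
spanned by the empty face). -/
abbrev Chains (K : SComplex S) (k : ℤ) : Type := Face K k →₀ ℤ

open Classical in
/-- The simplicial boundary map, sending a face `σ` with `j` vertices to the
alternating sum of its codimension-one subfaces (recorded in `Chains K k`;
it is the usual boundary when `k = j - 1`, and `0` otherwise). -/
noncomputable def bdry (K : SComplex S) (j k : ℤ) : Chains K j →+ Chains K k :=
  Finsupp.liftAddHom fun σ =>
    (zmultiplesHom (Chains K k)) (∑ x ∈ σ.1,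
      ((-1 : ℤ) ^ ((σ.1.filter (fun y => y < x)).card)) •
        (if h : (σ.1.erase x ∈ K.faces ∧ (((σ.1.erase x).card : ℤ)) = k) then
          Finsupp.single (⟨σ.1.erase x, h⟩ : Face K k) (1 : ℤ) else 0))

/-- The subgroup of reduced `n`-cycles. -/
noncomputable abbrev cycles (K : SComplex S) (n : ℤ) : AddSubgroup (Chains K (n + 1)) :=
  (bdry K (n + 1) n).ker

/-- The reduced `n`-boundaries, viewed inside the `n`-cycles. -/
noncomputable abbrev boundariesIn (K : SComplex S) (n : ℤ) : AddSubgroup (cycles K n) :=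
  (bdry K (n + 2) (n + 1)).range.comap (cycles K n).subtype

/-- Reduced simplicial homology `H̃_n(K; ℤ)` of the simplicial complex `K`,
computed from the augmented simplicial chain complex. -/
noncomputable abbrev RH (K : SComplex S) (n : ℤ) : Type :=
  cycles K n ⧸ boundariesIn K n

/-- The chain map induced by an inclusion of simplicial complexes. -/
noncomputable def chainMap {K1 K2 : SComplex S} (h : K1.faces ⊆ K2.faces) (k : ℤ) :
    Chains K1 k →+ Chains K2 k :=
  Finsupp.mapDomain.addMonoidHom (fun σ => (⟨σ.1, h σ.2.1, σ.2.2⟩ : Face K2 k))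

open Classical in
lemma bdry_chainMap {K1 K2 : SComplex S} (h : K1.faces ⊆ K2.faces) (j k : ℤ) (c : Chains K1 j) :
    bdry K2 j k (chainMap h j c) = chainMap h k (bdry K1 j k c) := by
  have hmap : ∀ (K1 K2 : SComplex S) (h : K1.faces ⊆ K2.faces) (k : ℤ) (a : Face K1 k) (b : ℤ),
      chainMap h k (Finsupp.single a b) =
        Finsupp.single (⟨a.1, h a.2.1, a.2.2⟩ : Face K2 k) b := by
    intro K1 K2 h k a b
    exact Finsupp.mapDomain_single
  induction c using Finsupp.induction_linear with
  | zero => simp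
  | add f g hf hg => simp only [map_add, hf, hg]
  | single σ b =>
    rw [hmap, bdry, bdry, Finsupp.liftAddHom_apply_single, Finsupp.liftAddHom_apply_single,
      zmultiplesHom_apply, zmultiplesHom_apply, map_zsmul]
    congr 1
    rw [map_sum]
    refine Finset.sum_congr rfl fun x hx => ?_
    rw [map_zsmul]
    congr 1
    by_cases hc : ((σ.1.erase x).card : ℤ) = k
    · have h1 : σ.1.erase x ∈ K1.faces ∧ ((σ.1.erase x).card : ℤ) = k :=
        ⟨K1.down_closed σ.2.1 (Finset.erase_subset _ _), hc⟩
      have h2 : σ.1.erase x ∈ K2.faces ∧ ((σ.1.erase x).card : ℤ) = k :=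
        ⟨h h1.1, hc⟩
      rw [dif_pos h1, dif_pos h2, hmap]
    · have h1 : ¬(σ.1.erase x ∈ K1.faces ∧ ((σ.1.erase x).card : ℤ) = k) := fun h' => hc h'.2
      have h2 : ¬(σ.1.erase x ∈ K2.faces ∧ ((σ.1.erase x).card : ℤ) = k) := fun h' => hc h'.2
      rw [dif_neg h1, dif_neg h2, map_zero]

/-- The map on cycles induced by an inclusion of simplicial complexes. -/
noncomputable def cycleMap {K1 K2 : SComplex S} (h : K1.faces ⊆ K2.faces) (n : ℤ) :
    cycles K1 n →+ cycles K2 n :=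
  AddMonoidHom.codRestrict ((chainMap h (n + 1)).comp (cycles K1 n).subtype)
    (cycles K2 n) (by
      rintro ⟨x, hx⟩
      rw [AddMonoidHom.mem_ker]
      have hx0 : bdry K1 (n + 1) n x = 0 := hx
      show bdry K2 (n + 1) n (chainMap h (n + 1) x) = 0
      rw [bdry_chainMap h, hx0, map_zero])

/-- The map `H̃_n(K¹) → H̃_n(K²)` induced by an inclusion `K¹ ⊆ K²` of
simplicial complexes. -/
noncomputable def inducedRH {K1 K2 : SComplex S} (h : K1.faces ⊆ K2.faces) (n : ℤ) :
    RH K1 n →+ RH K2 n :=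
  QuotientAddGroup.map _ _ (cycleMap h n) (by
    rintro z hz
    obtain ⟨c, hc⟩ := hz
    refine ⟨chainMap h (n + 2) c, ?_⟩
    show bdry K2 (n + 2) (n + 1) (chainMap h (n + 2) c) = (cycleMap h n z : Chains K2 (n + 1))
    rw [bdry_chainMap h]
    show chainMap h (n + 1) (bdry K1 (n + 2) (n + 1) c) = chainMap h (n + 1) (z : Chains K1 (n + 1))
    exact congrArg _ hc)

lemma cycleMap_comp {K1 K2 K3 : SComplex S} (h1 : K1.faces ⊆ K2.faces)
    (h2 : K2.faces ⊆ K3.faces) (n : ℤ) (z : cycles K1 n) :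
    cycleMap h2 n (cycleMap h1 n z) = cycleMap (h1.trans h2) n z := by
  apply Subtype.ext
  show Finsupp.mapDomain _ (Finsupp.mapDomain _ (z : Chains K1 (n + 1))) = Finsupp.mapDomain _ _
  rw [← Finsupp.mapDomain_comp]
  rfl

lemma inducedRH_comp {K1 K2 K3 : SComplex S} (h1 : K1.faces ⊆ K2.faces)
    (h2 : K2.faces ⊆ K3.faces) (n : ℤ) (a : RH K1 n) :
    inducedRH h2 n (inducedRH h1 n a) = inducedRH (h1.trans h2) n a := by
  induction a using QuotientAddGroup.induction_on with
  | H z =>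
    show QuotientAddGroup.mk _ = QuotientAddGroup.mk _
    rw [cycleMap_comp]

lemma restrict_mono {K1 K2 : SComplex S} (h : K1.faces ⊆ K2.faces) (J : Finset ℕ) :
    (K1.restrict J).faces ⊆ (K2.restrict J).faces := by
  rintro τ ⟨σ, hσ, rfl⟩
  exact ⟨σ, h hσ, rfl⟩

lemma restrict_le_insert (K : SComplex S) (x : ℕ) (J : Finset ℕ) :
    (K.restrict J).faces ⊆ (K.restrict (insert x J)).faces := by
  rintro τ ⟨σ, hσ, rfl⟩
  refine ⟨σ ∩ J, K.down_closed hσ Finset.inter_subset_left, ?_⟩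
  exact (Finset.inter_eq_left.mpr
    (Finset.inter_subset_right.trans (Finset.subset_insert x J))).symm

/-! ### The double homology complex `CH` and double homology `HH` -/

/-- Index type: subsets `J ⊆ S` with `|J| = l`. -/
abbrev Idx (S : Finset ℕ) (l : ℤ) : Type := {J : Finset ℕ // J ⊆ S ∧ (J.card : ℤ) = l}

/-- `CH_n^l(Z_K) = ⊕_{J ⊆ S, |J| = l} H̃_{n-1}(K_J)`. -/
noncomputable abbrev CH (K : SComplex S) (n l : ℤ) : Type :=
  ⨁ (J : Idx S l), RH (K.restrict J.1) (n - 1)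

/-- The sign `ε(x, J) = (-1)^{#{j ∈ J : j < x}}`. -/
def eps (x : ℕ) (J : Finset ℕ) : ℤ := (-1 : ℤ) ^ ((J.filter (fun y => y < x)).card)

/-- The sign `(-1)^n` for `n : ℤ`. -/
def sgn (n : ℤ) : ℤ := (((-1 : ℤˣ) ^ n : ℤˣ) : ℤ)

set_option maxHeartbeats 1000000 in
open Classical in
/-- The differential of the double homology complex: on the summand indexed by
`J` (with `|J| = l`) it is `(-1)^n Σ_{x ∈ S∖J} ε(x,J) φ_{J,x}`, where `φ_{J,x}`
is induced by the inclusion `K_J ↪ K_{J∪{x}}` (recorded in `CH K n l'`; it is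
the actual differential when `l' = l + 1`, and `0` otherwise). -/
noncomputable def dCH (K : SComplex S) (n l l' : ℤ) : CH K n l →+ CH K n l' :=
  DirectSum.toAddMonoid fun J =>
    ∑ x ∈ S \ J.1,
      (sgn n * eps x J.1) •
        (if h : (insert x J.1 ⊆ S ∧ (((insert x J.1).card : ℤ)) = l') then
          (DirectSum.of (fun J' : Idx S l' => RH (K.restrict J'.1) (n - 1))
              (⟨insert x J.1, h⟩ : Idx S l')).comp
            (inducedRH (restrict_le_insert K x J.1) (n - 1))
        else 0)

/-- The double homology `HH_n^l(Z_K)`: the `l`-th cohomology of `(CH_n^*(Z_K), d)`. -/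
noncomputable abbrev HH (K : SComplex S) (n l : ℤ) : Type :=
  (dCH K n l (l + 1)).ker ⧸
    ((dCH K n (l - 1) l).range.comap (dCH K n l (l + 1)).ker.subtype)

set_option maxHeartbeats 1000000 in
/-- The map `CH_n^l(Z_{K¹}) → CH_n^l(Z_{K²})` induced by an inclusion `K¹ ⊆ K²`. -/
noncomputable def CHmap {K1 K2 : SComplex S} (h : K1.faces ⊆ K2.faces) (n l : ℤ) :
    CH K1 n l →+ CH K2 n l :=
  DirectSum.toAddMonoid fun J =>
    (DirectSum.of (fun J' : Idx S l => RH (K2.restrict J'.1) (n - 1)) J).comp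
      (inducedRH (restrict_mono h J.1) (n - 1))

set_option maxHeartbeats 2000000 in
open Classical in
/-- Naturality of the differential `d` with respect to inclusion-induced maps. -/
lemma CHmap_dCH {K1 K2 : SComplex S} (h : K1.faces ⊆ K2.faces) (n l l' : ℤ) :
    (CHmap h n l').comp (dCH K1 n l l') = (dCH K2 n l l').comp (CHmap h n l) := by
  refine DirectSum.addHom_ext fun J a => ?_
  simp only [AddMonoidHom.comp_apply, dCH, CHmap, DirectSum.toAddMonoid_of]
  rw [AddMonoidHom.finset_sum_apply, AddMonoidHom.finset_sum_apply, map_sum]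
  refine Finset.sum_congr rfl fun x hx => ?_
  rw [AddMonoidHom.smul_apply, AddMonoidHom.smul_apply, map_zsmul]
  congr 1
  by_cases hc : insert x J.1 ⊆ S ∧ ((insert x J.1).card : ℤ) = l'
  · rw [dif_pos hc, dif_pos hc]
    rw [AddMonoidHom.comp_apply, AddMonoidHom.comp_apply, DirectSum.toAddMonoid_of,
      AddMonoidHom.comp_apply]
    congr 1
    rw [inducedRH_comp, inducedRH_comp]
  · rw [dif_neg hc, dif_neg hc]
    simp

set_option maxHeartbeats 2000000 in
/-- The map `HH_n^l(Z_{K¹}) → HH_n^l(Z_{K²})` induced by an inclusion `K¹ ⊆ K²`. -/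
noncomputable def HHmap {K1 K2 : SComplex S} (h : K1.faces ⊆ K2.faces) (n l : ℤ) :
    HH K1 n l →+ HH K2 n l :=
  QuotientAddGroup.map _ _
    (AddMonoidHom.codRestrict
      ((CHmap h n l).comp (dCH K1 n l (l + 1)).ker.subtype)
      (dCH K2 n l (l + 1)).ker (by
        rintro ⟨x, hx⟩
        rw [AddMonoidHom.mem_ker]
        have hx0 : dCH K1 n l (l + 1) x = 0 := hx
        show dCH K2 n l (l + 1) (CHmap h n l x) = 0
        have hnat := congrArg (fun f => f x) (CHmap_dCH h n l (l + 1))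
        simp only [AddMonoidHom.comp_apply] at hnat
        rw [← hnat, hx0, map_zero]))
    (by
      rintro z hz
      obtain ⟨c, hc⟩ := hz
      refine ⟨CHmap h n (l - 1) c, ?_⟩
      have hnat := congrArg (fun f => f c) (CHmap_dCH h n (l - 1) l)
      simp only [AddMonoidHom.comp_apply] at hnat
      show dCH K2 n (l - 1) l (CHmap h n (l - 1) c) = CHmap h n l ((z : CH K1 n l))
      rw [← hnat]
      exact congrArg _ hc)

/-! ### Path connectivity -/

/-- Two vertices are related if they span an edge of `K`. -/
def EdgeRel (K : SComplex S) (a b : ℕ) : Prop := ({a, b} : Finset ℕ) ∈ K.faces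

/-- Reachability by a chain of edges. -/
def Reach (K : SComplex S) : ℕ → ℕ → Prop := Relation.ReflTransGen (EdgeRel K)

/-- `K` is path-connected: any two vertices are joined by a chain of edges. -/
def IsPathConnected (K : SComplex S) : Prop :=
  ∀ a b : ℕ, ({a} : Finset ℕ) ∈ K.faces → ({b} : Finset ℕ) ∈ K.faces → Reach K a b

/-- The number of path components of `K` (equivalence classes of vertices under
the relation generated by sharing an edge). -/
noncomputable def numComponents (K : SComplex S) : ℕ :=
  Nat.card (Quot (fun a b : {x : ℕ // ({x} : Finset ℕ) ∈ K.faces} => Reach K a.1 b.1))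




variable {S : Finset ℕ}

lemma card_erase_cast {s : Finset ℕ} {x : ℕ} (hx : x ∈ s) :
    (((s.erase x).card : ℤ)) = (s.card : ℤ) - 1 := by
  rw [Finset.card_erase_of_mem hx]
  have h1 : 1 ≤ s.card := Finset.card_pos.mpr ⟨x, hx⟩
  omega

lemma chainMap_single {K1 K2 : SComplex S} (h : K1.faces ⊆ K2.faces) (k : ℤ)
    (a : Face K1 k) (b : ℤ) :
    chainMap h k (Finsupp.single a b) =
      Finsupp.single (⟨a.1, h a.2.1, a.2.2⟩ : Face K2 k) b :=
  Finsupp.mapDomain_single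

lemma chainMap_injective {K1 K2 : SComplex S} (h : K1.faces ⊆ K2.faces) (k : ℤ) :
    Function.Injective (chainMap h k) :=
  Finsupp.mapDomain_injective (fun a b hab => Subtype.ext (Subtype.mk_eq_mk.mp hab))

lemma chainMap_comp {K1 K2 K3 : SComplex S} (h1 : K1.faces ⊆ K2.faces)
    (h2 : K2.faces ⊆ K3.faces) (k : ℤ) (c : Chains K1 k) :
    chainMap h2 k (chainMap h1 k c) = chainMap (h1.trans h2) k c := by
  show Finsupp.mapDomain _ (Finsupp.mapDomain _ c) = Finsupp.mapDomain _ c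
  rw [← Finsupp.mapDomain_comp]
  rfl

open Classical in
lemma bdry_single (K : SComplex S) (j k : ℤ) (σ : Face K j) (b : ℤ) :
    bdry K j k (Finsupp.single σ b) =
      b • ∑ x ∈ σ.1, ((-1 : ℤ) ^ ((σ.1.filter (fun y => y < x)).card)) •
        (if h : (σ.1.erase x ∈ K.faces ∧ (((σ.1.erase x).card : ℤ)) = k) then
          Finsupp.single (⟨σ.1.erase x, h⟩ : Face K k) (1 : ℤ) else 0) := by
  rw [bdry, Finsupp.liftAddHom_apply_single, zmultiplesHom_apply]

open Classical in
lemma bdry_bdry (K : SComplex S) (j k l : ℤ) (hk : k = j - 1) (hl : l = k - 1)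
    (c : Chains K j) : bdry K k l (bdry K j k c) = 0 := by
  subst hk hl
  induction c using Finsupp.induction_linear with
  | zero => simp
  | add f g hf hg => rw [map_add, map_add, hf, hg, add_zero]
  | single σ b =>
    obtain ⟨s, hs, hcard⟩ := σ
    rw [bdry_single, map_zsmul, map_sum]
    have hface : ∀ x ∈ s, s.erase x ∈ K.faces :=
      fun x hx => K.down_closed hs (Finset.erase_subset _ _)
    have hcardx : ∀ x ∈ s, ((s.erase x).card : ℤ) = j - 1 :=
      fun x hx => by rw [card_erase_cast hx, hcard]
    set F : ℕ → ℕ → Chains K (j - 1 - 1) := fun x y =>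
      ((-1 : ℤ) ^ ((s.filter (fun z => z < x)).card) *
        (-1 : ℤ) ^ (((s.erase x).filter (fun z => z < y)).card)) •
        (if h : ((s.erase x).erase y ∈ K.faces ∧
            ((((s.erase x).erase y).card : ℤ)) = j - 1 - 1) then
          Finsupp.single (⟨(s.erase x).erase y, h⟩ : Face K (j - 1 - 1)) (1 : ℤ) else 0)
      with hF_def
    have expand : ∀ x ∈ s,
        bdry K (j-1) (j-1-1) (((-1 : ℤ) ^ ((s.filter (fun y => y < x)).card)) •
          (if h : (s.erase x ∈ K.faces ∧ (((s.erase x).card : ℤ)) = j - 1) then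
            Finsupp.single (⟨s.erase x, h⟩ : Face K (j-1)) (1 : ℤ) else 0)) =
          ∑ y ∈ s.erase x, F x y := by
      intro x hx
      rw [map_zsmul, dif_pos ⟨hface x hx, hcardx x hx⟩, bdry_single, one_smul,
        Finset.smul_sum]
      refine Finset.sum_congr rfl fun y hy => ?_
      rw [smul_smul]
    rw [Finset.sum_congr rfl expand]
    have key : ∀ a b : ℕ, a ∈ s → a ≠ b →
        ((-1 : ℤ) ^ (((s.erase a).filter (fun z => z < b)).card)) =
          (if a < b then (-1 : ℤ) else 1) *
            (-1 : ℤ) ^ ((s.filter (fun z => z < b)).card) := by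
      intro a b ha hab
      rw [Finset.filter_erase]
      by_cases hab' : a < b
      · have hmem : a ∈ s.filter (fun z => z < b) := Finset.mem_filter.mpr ⟨ha, hab'⟩
        obtain ⟨c, hc⟩ : ∃ c, (s.filter (fun z => z < b)).card = c + 1 :=
          ⟨_, (Nat.succ_pred_eq_of_pos (Finset.card_pos.mpr ⟨a, hmem⟩)).symm⟩
        rw [Finset.card_erase_of_mem hmem, hc, if_pos hab', Nat.add_sub_cancel, pow_succ]
        ring
      · have hnot : a ∉ s.filter (fun z => z < b) :=
          fun hmem => hab' (Finset.mem_filter.mp hmem).2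
        rw [Finset.erase_eq_of_notMem hnot, if_neg hab', one_mul]
    have hF : ∀ x ∈ s, ∀ y ∈ s.erase x, F x y + F y x = 0 := by
      intro x hx y hy
      have hyx : y ≠ x := Finset.ne_of_mem_erase hy
      have hys : y ∈ s := Finset.mem_of_mem_erase hy
      have herase : (s.erase x).erase y = (s.erase y).erase x := Finset.erase_right_comm
      have hmem1 : (s.erase x).erase y ∈ K.faces :=
        K.down_closed (hface x hx) (Finset.erase_subset _ _)
      have hcard1 : ((((s.erase x).erase y).card : ℤ)) = j - 1 - 1 := by
        rw [card_erase_cast hy, hcardx x hx]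
      have hmem2 : (s.erase y).erase x ∈ K.faces := herase ▸ hmem1
      have hcard2 : ((((s.erase y).erase x).card : ℤ)) = j - 1 - 1 := herase ▸ hcard1
      rw [hF_def]
      simp only []
      rw [dif_pos ⟨hmem1, hcard1⟩, dif_pos ⟨hmem2, hcard2⟩]
      have hsingle_eq : Finsupp.single (⟨(s.erase y).erase x, ⟨hmem2, hcard2⟩⟩ : Face K (j-1-1)) (1 : ℤ)
          = Finsupp.single (⟨(s.erase x).erase y, ⟨hmem1, hcard1⟩⟩ : Face K (j-1-1)) (1 : ℤ) := by
        congr 1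
        exact Subtype.ext herase.symm
      rw [hsingle_eq, ← add_smul]
      have hcoef : ((-1 : ℤ) ^ ((s.filter (fun z => z < x)).card) *
          (-1 : ℤ) ^ (((s.erase x).filter (fun z => z < y)).card) +
          (-1 : ℤ) ^ ((s.filter (fun z => z < y)).card) *
          (-1 : ℤ) ^ (((s.erase y).filter (fun z => z < x)).card)) = 0 := by
        rw [key x y hx (Ne.symm hyx), key y x hys hyx]
        rcases Ne.lt_or_gt (Ne.symm hyx) with h | h
        · rw [if_pos h, if_neg (by omega)]
          ring
        · rw [if_neg (by omega), if_pos h]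
          ring
      rw [hcoef, zero_smul]
    have hcomm : (∑ x ∈ s, ∑ y ∈ s.erase x, F x y) = ∑ y ∈ s, ∑ x ∈ s.erase y, F x y :=
      Finset.sum_comm' (by
        intro x y
        constructor
        · rintro ⟨h1, h2⟩
          exact ⟨Finset.mem_erase.mpr ⟨(Finset.ne_of_mem_erase h2).symm, h1⟩,
            Finset.mem_of_mem_erase h2⟩
        · rintro ⟨h1, h2⟩
          exact ⟨Finset.mem_of_mem_erase h1,
            Finset.mem_erase.mpr ⟨(Finset.ne_of_mem_erase h1).symm, h2⟩⟩)
    have htot : (∑ x ∈ s, ∑ y ∈ s.erase x, F x y) + (∑ x ∈ s, ∑ y ∈ s.erase x, F x y) = 0 := by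
      nth_rewrite 1 [hcomm]
      rw [← Finset.sum_add_distrib]
      refine Finset.sum_eq_zero fun a ha => ?_
      rw [← Finset.sum_add_distrib]
      refine Finset.sum_eq_zero fun b hb => ?_
      rw [add_comm]
      exact hF a ha b hb
    have hzero : (∑ x ∈ s, ∑ y ∈ s.erase x, F x y) = 0 := by
      ext t
      have ht := congrArg (fun g => g t) htot
      simp only [Finsupp.add_apply, Finsupp.coe_zero, Pi.zero_apply] at ht ⊢
      omega
    rw [hzero, smul_zero]

open Classical in
/-- The cone operator on chains of a full simplex, coning at the vertex `v`. -/
noncomputable def coneMap (P : SComplex S) (v : ℕ) (j k : ℤ) : Chains P j →+ Chains P k :=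
  Finsupp.liftAddHom fun σ =>
    (zmultiplesHom (Chains P k)) (if h : (v ∉ σ.1 ∧ insert v σ.1 ∈ P.faces ∧
        (((insert v σ.1).card : ℤ)) = k) then
      Finsupp.single (⟨insert v σ.1, h.2⟩ : Face P k) (1 : ℤ) else 0)

open Classical in
lemma cone_single (P : SComplex S) (v : ℕ) (j k : ℤ) (σ : Face P j) (b : ℤ) :
    coneMap P v j k (Finsupp.single σ b) =
      b • (if h : (v ∉ σ.1 ∧ insert v σ.1 ∈ P.faces ∧
          (((insert v σ.1).card : ℤ)) = k) then
        Finsupp.single (⟨insert v σ.1, h.2⟩ : Face P k) (1 : ℤ) else 0) := by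
  rw [coneMap, Finsupp.liftAddHom_apply_single, zmultiplesHom_apply]

open Classical in
lemma bdry_single' (K : SComplex S) (j k : ℤ) (s : Finset ℕ) (hs : s ∈ K.faces)
    (hc : (s.card : ℤ) = j) (b : ℤ) :
    bdry K j k (Finsupp.single (⟨s, hs, hc⟩ : Face K j) b) =
      b • ∑ x ∈ s, ((-1 : ℤ) ^ ((s.filter (fun y => y < x)).card)) •
        (if h : (s.erase x ∈ K.faces ∧ (((s.erase x).card : ℤ)) = k) then
          Finsupp.single (⟨s.erase x, h⟩ : Face K k) (1 : ℤ) else 0) := by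
  rw [bdry, Finsupp.liftAddHom_apply_single, zmultiplesHom_apply]

open Classical in
lemma cone_single' (P : SComplex S) (v : ℕ) (j k : ℤ) (s : Finset ℕ) (hs : s ∈ P.faces)
    (hc : (s.card : ℤ) = j) (b : ℤ) :
    coneMap P v j k (Finsupp.single (⟨s, hs, hc⟩ : Face P j) b) =
      b • (if h : (v ∉ s ∧ insert v s ∈ P.faces ∧ (((insert v s).card : ℤ)) = k) then
        Finsupp.single (⟨insert v s, h.2⟩ : Face P k) (1 : ℤ) else 0) := by
  rw [coneMap, Finsupp.liftAddHom_apply_single, zmultiplesHom_apply]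

open Classical in
lemma cone_identity (P : SComplex S) (ρ : Finset ℕ) (hP : P.faces = {τ : Finset ℕ | τ ⊆ ρ})
    (v : ℕ) (hv : v ∈ ρ) (hmin : ∀ y ∈ ρ, v ≤ y) (j k m : ℤ) (hk : k = j + 1)
    (hm : m = j - 1) (z : Chains P j) :
    bdry P k j (coneMap P v j k z) + coneMap P v m j (bdry P j m z) = z := by
  subst hk hm
  induction z using Finsupp.induction_linear with
  | zero => simp
  | add f g hf hg =>
    simp only [map_add]
    conv_rhs => rw [← hf, ← hg]
    abel
  | single σ b =>
    obtain ⟨s, hs, hcard⟩ := σ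
    have hsρ : s ⊆ ρ := by rw [hP] at hs; exact hs
    by_cases hvs : v ∈ s
    · -- cone of σ is zero; cone of boundary gives back σ
      rw [cone_single' P v j (j+1) s hs hcard b]
      have hneg : ¬ (v ∉ s ∧ insert v s ∈ P.faces ∧ (((insert v s).card : ℤ)) = j + 1) :=
        fun h => h.1 hvs
      rw [dif_neg hneg, smul_zero, map_zero, zero_add, bdry_single' P j (j-1) s hs hcard b,
        map_zsmul, map_sum]
      have hterm : ∀ x ∈ s,
          coneMap P v (j-1) j (((-1 : ℤ) ^ ((s.filter (fun y => y < x)).card)) •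
            (if h : (s.erase x ∈ P.faces ∧ (((s.erase x).card : ℤ)) = j - 1) then
              Finsupp.single (⟨s.erase x, h⟩ : Face P (j-1)) (1 : ℤ) else 0)) =
            if x = v then Finsupp.single (⟨s, hs, hcard⟩ : Face P j) (1 : ℤ) else 0 := by
        intro x hx
        have hfx : s.erase x ∈ P.faces := P.down_closed hs (Finset.erase_subset _ _)
        have hcx : ((s.erase x).card : ℤ) = j - 1 := by rw [card_erase_cast hx, hcard]
        rw [map_zsmul, dif_pos ⟨hfx, hcx⟩, cone_single' P v (j-1) j (s.erase x) hfx hcx 1,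
          one_smul]
        by_cases hxv : x = v
        · have hpos : v ∉ s.erase x ∧ insert v (s.erase x) ∈ P.faces ∧
              (((insert v (s.erase x)).card : ℤ)) = j := by
            subst hxv
            refine ⟨Finset.notMem_erase _ _, ?_, ?_⟩
            · rw [Finset.insert_erase hx]; exact hs
            · rw [Finset.insert_erase hx]; exact hcard
          rw [dif_pos hpos, if_pos hxv]
          have hfilter : s.filter (fun y => y < x) = ∅ :=
            Finset.filter_eq_empty_iff.mpr
              (fun y hy => by have := hmin y (hsρ hy); omega)
          rw [hfilter]
          simp only [Finset.card_empty, pow_zero, one_smul]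
          congr 1
          refine Subtype.ext ?_
          show insert v (s.erase x) = s
          subst hxv
          exact Finset.insert_erase hx
        · have hneg2 : ¬ (v ∉ s.erase x ∧ insert v (s.erase x) ∈ P.faces ∧
              (((insert v (s.erase x)).card : ℤ)) = j) :=
            fun h => h.1 (Finset.mem_erase.mpr ⟨fun hvx => hxv hvx.symm, hvs⟩)
          rw [dif_neg hneg2, smul_zero, if_neg hxv]
      rw [Finset.sum_congr rfl hterm, Finset.sum_ite_eq' s v
        (fun _ => Finsupp.single (⟨s, hs, hcard⟩ : Face P j) (1 : ℤ)), if_pos hvs]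
      rw [Finsupp.smul_single, smul_eq_mul, mul_one]
    · -- v not in s
      rw [cone_single' P v j (j+1) s hs hcard b]
      have hins : insert v s ∈ P.faces := by
        rw [hP]; exact Finset.insert_subset hv hsρ
      have hinsc : (((insert v s).card : ℤ)) = j + 1 := by
        rw [Finset.card_insert_of_notMem hvs]; push_cast; omega
      rw [dif_pos ⟨hvs, hins, hinsc⟩, map_zsmul]
      rw [show (⟨insert v s, (⟨hvs, hins, hinsc⟩ :
          (v ∉ s ∧ insert v s ∈ P.faces ∧ (((insert v s).card : ℤ)) = j + 1)).2⟩ :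
          Face P (j+1)) = ⟨insert v s, hins, hinsc⟩ from rfl]
      rw [bdry_single' P (j+1) j (insert v s) hins hinsc 1, one_smul]
      rw [Finset.sum_insert hvs]
      have hvterm : ((-1 : ℤ) ^ (((insert v s).filter (fun y => y < v)).card)) •
          (if h : ((insert v s).erase v ∈ P.faces ∧ ((((insert v s).erase v).card : ℤ)) = j) then
            Finsupp.single (⟨(insert v s).erase v, h⟩ : Face P j) (1 : ℤ) else 0) =
          Finsupp.single (⟨s, hs, hcard⟩ : Face P j) (1 : ℤ) := by
        have herase : (insert v s).erase v = s := Finset.erase_insert hvs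
        have hfilter : (insert v s).filter (fun y => y < v) = ∅ :=
          Finset.filter_eq_empty_iff.mpr (fun y hy => by
            rcases Finset.mem_insert.mp hy with h | h
            · omega
            · have := hmin y (hsρ h); omega)
        rw [hfilter]
        simp only [Finset.card_empty, pow_zero, one_smul]
        rw [dif_pos ⟨(by rw [herase]; exact hs), (by rw [herase]; exact hcard)⟩]
        congr 1
        exact Subtype.ext herase
      rw [hvterm]
      have hrest : ∀ x ∈ s, ((-1 : ℤ) ^ (((insert v s).filter (fun y => y < x)).card)) •
          (if h : ((insert v s).erase x ∈ P.faces ∧ ((((insert v s).erase x).card : ℤ)) = j) then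
            Finsupp.single (⟨(insert v s).erase x, h⟩ : Face P j) (1 : ℤ) else 0) =
          - (((-1 : ℤ) ^ ((s.filter (fun y => y < x)).card)) •
            (if h : (v ∉ s.erase x ∧ insert v (s.erase x) ∈ P.faces ∧
                (((insert v (s.erase x)).card : ℤ)) = j) then
              Finsupp.single (⟨insert v (s.erase x), h.2⟩ : Face P j) (1 : ℤ) else 0)) := by
        intro x hx
        have hvx : v ≠ x := fun h => hvs (h ▸ hx)
        have hvltx : v < x := lt_of_le_of_ne (hmin x (hsρ hx)) hvx
        have herase : (insert v s).erase x = insert v (s.erase x) :=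
          Finset.erase_insert_of_ne hvx
        have hmem : insert v (s.erase x) ∈ P.faces := by
          rw [hP]
          exact Finset.insert_subset hv ((Finset.erase_subset _ _).trans hsρ)
        have hcardm : (((insert v (s.erase x)).card : ℤ)) = j := by
          have h1 : 1 ≤ s.card := Finset.card_pos.mpr ⟨x, hx⟩
          rw [Finset.card_insert_of_notMem (fun h => hvs (Finset.mem_of_mem_erase h)),
            Finset.card_erase_of_mem hx, Nat.sub_add_cancel h1]
          exact hcard
        have hfilter : (insert v s).filter (fun y => y < x) =
            insert v (s.filter (fun y => y < x)) := by
          rw [Finset.filter_insert, if_pos hvltx]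
        have hvnf : v ∉ s.filter (fun y => y < x) := fun h => hvs (Finset.mem_filter.mp h).1
        rw [hfilter, Finset.card_insert_of_notMem hvnf, herase]
        rw [dif_pos ⟨hmem, hcardm⟩,
          dif_pos (⟨fun h => hvs (Finset.mem_of_mem_erase h), hmem, hcardm⟩ :
            (v ∉ s.erase x ∧ insert v (s.erase x) ∈ P.faces ∧
              (((insert v (s.erase x)).card : ℤ)) = j))]
        rw [pow_succ, ← neg_smul]
        congr 1
        ring
      rw [Finset.sum_congr rfl hrest, bdry_single' P j (j-1) s hs hcard b, map_zsmul, map_sum]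
      have hcone : ∀ x ∈ s,
          coneMap P v (j-1) j (((-1 : ℤ) ^ ((s.filter (fun y => y < x)).card)) •
            (if h : (s.erase x ∈ P.faces ∧ (((s.erase x).card : ℤ)) = j - 1) then
              Finsupp.single (⟨s.erase x, h⟩ : Face P (j-1)) (1 : ℤ) else 0)) =
            ((-1 : ℤ) ^ ((s.filter (fun y => y < x)).card)) •
            (if h : (v ∉ s.erase x ∧ insert v (s.erase x) ∈ P.faces ∧
                (((insert v (s.erase x)).card : ℤ)) = j) then
              Finsupp.single (⟨insert v (s.erase x), h.2⟩ : Face P j) (1 : ℤ) else 0) := by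
        intro x hx
        have hfx : s.erase x ∈ P.faces := P.down_closed hs (Finset.erase_subset _ _)
        have hcx : ((s.erase x).card : ℤ) = j - 1 := by rw [card_erase_cast hx, hcard]
        rw [map_zsmul, dif_pos ⟨hfx, hcx⟩, cone_single' P v (j-1) j (s.erase x) hfx hcx 1,
          one_smul]
      rw [Finset.sum_congr rfl hcone]
      rw [smul_add]
      rw [Finsupp.smul_single, smul_eq_mul, mul_one]
      rw [Finset.sum_neg_distrib, smul_neg]
      abel

lemma cycles_bdry_eq_zero {K : SComplex S} {n : ℤ} (z : cycles K n) :
    bdry K (n + 1) n (z : Chains K (n + 1)) = 0 :=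
  AddMonoidHom.mem_ker.mp z.2

lemma mem_boundariesIn_iff {K : SComplex S} {n : ℤ} (z : cycles K n) :
    z ∈ boundariesIn K n ↔ ∃ u : Chains K (n + 2),
      bdry K (n + 2) (n + 1) u = (z : Chains K (n + 1)) := by
  rw [AddSubgroup.mem_comap]
  exact AddMonoidHom.mem_range

lemma RH_mk_eq_zero_iff {K : SComplex S} {n : ℤ} (z : cycles K n) :
    (QuotientAddGroup.mk z : RH K n) = 0 ↔ ∃ u : Chains K (n + 2),
      bdry K (n + 2) (n + 1) u = (z : Chains K (n + 1)) := by
  rw [QuotientAddGroup.eq_zero_iff]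
  exact mem_boundariesIn_iff z

lemma RH_mk_eq_mk {K : SComplex S} {n : ℤ} (z w : cycles K n)
    (u : Chains K (n + 2))
    (hu : bdry K (n + 2) (n + 1) u = (z : Chains K (n + 1)) - (w : Chains K (n + 1))) :
    (QuotientAddGroup.mk z : RH K n) = QuotientAddGroup.mk w := by
  have : z - w ∈ boundariesIn K n := (mem_boundariesIn_iff _).mpr ⟨u, hu⟩
  rw [← sub_eq_zero, ← QuotientAddGroup.mk_sub, QuotientAddGroup.eq_zero_iff]
  exact this

lemma inducedRH_mk {K1 K2 : SComplex S} (h : K1.faces ⊆ K2.faces) (n : ℤ)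
    (z : cycles K1 n) :
    inducedRH h n (QuotientAddGroup.mk z) = QuotientAddGroup.mk (cycleMap h n z) :=
  rfl

lemma cycleMap_val {K1 K2 : SComplex S} (h : K1.faces ⊆ K2.faces) (n : ℤ)
    (z : cycles K1 n) :
    (cycleMap h n z : Chains K2 (n + 1)) = chainMap h (n + 1) (z : Chains K1 (n + 1)) :=
  rfl

/-- Triviality of reduced homology of a full simplex in non-negative degrees. -/
lemma RH_trivial_of_simplex (P : SComplex S) (ρ : Finset ℕ)
    (hP : P.faces = {τ : Finset ℕ | τ ⊆ ρ}) (n : ℤ) (hn : 0 ≤ n) (x : RH P n) :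
    x = 0 := by
  induction x using QuotientAddGroup.induction_on with
  | H z =>
    rcases Finset.eq_empty_or_nonempty ρ with hρ | hρ
    · have hz : (z : Chains P (n + 1)) = 0 := by
        ext a
        exfalso
        obtain ⟨s, hsf, hsc⟩ := a
        rw [hP, hρ] at hsf
        have : s = ∅ := Finset.subset_empty.mp hsf
        rw [this] at hsc
        simp at hsc
        omega
      have hz0 : z = 0 := Subtype.ext hz
      rw [hz0]
      rfl
    · set v := ρ.min' hρ with hv_def
      have hvmem : v ∈ ρ := ρ.min'_mem hρ
      have hvmin : ∀ y ∈ ρ, v ≤ y := fun y hy => ρ.min'_le y hy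
      rw [RH_mk_eq_zero_iff]
      refine ⟨coneMap P v (n + 1) (n + 2) (z : Chains P (n + 1)), ?_⟩
      have hid := cone_identity P ρ hP v hvmem hvmin (n + 1) (n + 2) n
        (by ring) (by ring) (z : Chains P (n + 1))
      rw [cycles_bdry_eq_zero z, map_zero, add_zero] at hid
      exact hid

section Splitting

variable {A B U : SComplex S}

lemma chains_split (hAU : A.faces ⊆ U.faces) (hBU : B.faces ⊆ U.faces)
    (hUAB : U.faces ⊆ A.faces ∪ B.faces) (k : ℤ) (u : Chains U k) :
    ∃ (a : Chains A k) (b : Chains B k), chainMap hAU k a + chainMap hBU k b = u := by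
  induction u using Finsupp.induction_linear with
  | zero => exact ⟨0, 0, by simp⟩
  | add f g hf hg =>
    obtain ⟨a1, b1, h1⟩ := hf
    obtain ⟨a2, b2, h2⟩ := hg
    exact ⟨a1 + a2, b1 + b2, by rw [map_add, map_add]; rw [← h1, ← h2]; abel⟩
  | single σ m =>
    rcases hUAB σ.2.1 with h | h
    · refine ⟨Finsupp.single ⟨σ.1, h, σ.2.2⟩ m, 0, ?_⟩
      rw [map_zero, add_zero, chainMap_single]
    · refine ⟨0, Finsupp.single ⟨σ.1, h, σ.2.2⟩ m, ?_⟩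
      rw [map_zero, zero_add, chainMap_single]

lemma chains_ker {I : SComplex S} (hAU : A.faces ⊆ U.faces) (hBU : B.faces ⊆ U.faces)
    (hIA : I.faces ⊆ A.faces) (hIB : I.faces ⊆ B.faces)
    (hABI : ∀ τ : Finset ℕ, τ ∈ A.faces → τ ∈ B.faces → τ ∈ I.faces) (k : ℤ)
    (a : Chains A k) (b : Chains B k)
    (h : chainMap hAU k a + chainMap hBU k b = 0) :
    ∃ c : Chains I k, chainMap hIA k c = a ∧ chainMap hIB k c = -b := by
  classical
  set fA : Face I k → Face A k := fun τ => ⟨τ.1, hIA τ.2.1, τ.2.2⟩ with hfA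
  have hfAinj : Function.Injective fA :=
    fun x y hxy => Subtype.ext (Subtype.mk_eq_mk.mp hxy)
  have hsupp : ↑a.support ⊆ Set.range fA := by
    intro τ hτ
    rw [Finset.mem_coe, Finsupp.mem_support_iff] at hτ
    have hmapval : (chainMap hAU k a) ⟨τ.1, hAU τ.2.1, τ.2.2⟩ = a τ := by
      show (Finsupp.mapDomain _ a) _ = a τ
      exact Finsupp.mapDomain_apply
        (fun x y hxy => Subtype.ext (Subtype.mk_eq_mk.mp hxy)) a τ
    have hBne : (chainMap hBU k b) ⟨τ.1, hAU τ.2.1, τ.2.2⟩ ≠ 0 := by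
      intro h0
      have := congrArg (fun g => g ⟨τ.1, hAU τ.2.1, τ.2.2⟩) h
      simp only [Finsupp.add_apply, Finsupp.coe_zero, Pi.zero_apply] at this
      rw [hmapval, h0, add_zero] at this
      exact hτ this
    have hBsupp : (⟨τ.1, hAU τ.2.1, τ.2.2⟩ : Face U k) ∈
        (chainMap hBU k b).support := Finsupp.mem_support_iff.mpr hBne
    have : (⟨τ.1, hAU τ.2.1, τ.2.2⟩ : Face U k) ∈
        b.support.image (fun σ : Face B k => (⟨σ.1, hBU σ.2.1, σ.2.2⟩ : Face U k)) :=
      Finsupp.mapDomain_support hBsupp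
    obtain ⟨σ, hσ, hσeq⟩ := Finset.mem_image.mp this
    have hτB : τ.1 ∈ B.faces := by
      have : σ.1 = τ.1 := Subtype.mk_eq_mk.mp hσeq
      exact this ▸ σ.2.1
    exact ⟨⟨τ.1, hABI τ.1 τ.2.1 hτB, τ.2.2⟩, Subtype.ext rfl⟩
  refine ⟨Finsupp.comapDomain fA a (hfAinj.injOn), ?_, ?_⟩
  · show Finsupp.mapDomain fA _ = a
    exact Finsupp.mapDomain_comapDomain fA hfAinj a hsupp
  · have h1 : chainMap hIA k (Finsupp.comapDomain fA a (hfAinj.injOn)) = a := by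
      show Finsupp.mapDomain fA _ = a
      exact Finsupp.mapDomain_comapDomain fA hfAinj a hsupp
    apply chainMap_injective hBU k
    rw [chainMap_comp, map_neg]
    have h2 : chainMap (hIB.trans hBU) k (Finsupp.comapDomain fA a (hfAinj.injOn)) =
        chainMap (hIA.trans hAU) k (Finsupp.comapDomain fA a (hfAinj.injOn)) := rfl
    rw [h2, ← chainMap_comp hIA hAU, h1]
    exact add_eq_zero_iff_eq_neg.mp h

end Splitting

lemma cycles_split {A B U I : SComplex S} (hAU : A.faces ⊆ U.faces)
    (hBU : B.faces ⊆ U.faces) (hIA : I.faces ⊆ A.faces) (hIB : I.faces ⊆ B.faces)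
    (hUAB : U.faces ⊆ A.faces ∪ B.faces)
    (hABI : ∀ τ : Finset ℕ, τ ∈ A.faces → τ ∈ B.faces → τ ∈ I.faces)
    (w : Finset ℕ) (hIw : I.faces = {τ : Finset ℕ | τ ⊆ w}) (n : ℤ)
    (hcase : w.Nonempty ∨ 1 ≤ n) (z : cycles U n) :
    ∃ (a : cycles A n) (b : cycles B n), cycleMap hAU n a + cycleMap hBU n b = z := by
  obtain ⟨zA, zB, hsplit⟩ := chains_split hAU hBU hUAB (n + 1) (z : Chains U (n + 1))
  have hbd : chainMap hAU n (bdry A (n+1) n zA) + chainMap hBU n (bdry B (n+1) n zB) = 0 := by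
    rw [← bdry_chainMap hAU, ← bdry_chainMap hBU, ← map_add, hsplit, cycles_bdry_eq_zero z]
  obtain ⟨d, hdA, hdB⟩ := chains_ker hAU hBU hIA hIB hABI n _ _ hbd
  have hd0 : bdry I n (n - 1) d = 0 := by
    apply chainMap_injective hIA (n - 1)
    rw [map_zero, ← bdry_chainMap hIA n (n-1) d, hdA,
      bdry_bdry A (n+1) n (n-1) (by ring) (by ring)]
  rcases Finset.eq_empty_or_nonempty w with hw | hw
  · have hne : 1 ≤ n := by
      rcases hcase with h | h
      · rw [hw] at h; exact absurd h Finset.not_nonempty_empty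
      · exact h
    have hd : d = 0 := by
      ext a
      exfalso
      obtain ⟨s, hsf, hsc⟩ := a
      rw [hIw, hw] at hsf
      have hse : s = ∅ := Finset.subset_empty.mp hsf
      rw [hse] at hsc
      simp at hsc
      omega
    have hzA : bdry A (n+1) n zA = 0 := by rw [← hdA, hd, map_zero]
    have hzB : bdry B (n+1) n zB = 0 := by
      have h2 := hdB
      rw [hd, map_zero] at h2
      exact neg_eq_zero.mp h2.symm
    refine ⟨⟨zA, AddMonoidHom.mem_ker.mpr hzA⟩, ⟨zB, AddMonoidHom.mem_ker.mpr hzB⟩,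
      Subtype.ext ?_⟩
    show chainMap hAU (n+1) zA + chainMap hBU (n+1) zB = (z : Chains U (n + 1))
    exact hsplit
  · set v := w.min' hw with hv_def
    have hvm : v ∈ w := w.min'_mem hw
    have hmin : ∀ y ∈ w, v ≤ y := fun y hy => w.min'_le y hy
    set c := coneMap I v n (n+1) d with hc_def
    have hc : bdry I (n+1) n c = d := by
      have hid := cone_identity I w hIw v hvm hmin n (n+1) (n-1) (by ring) (by ring) d
      rw [hd0, map_zero, add_zero] at hid
      exact hid
    have hzA' : bdry A (n+1) n (zA - chainMap hIA (n+1) c) = 0 := by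
      rw [map_sub, bdry_chainMap hIA (n+1) n c, hc, hdA, sub_self]
    have hzB' : bdry B (n+1) n (zB + chainMap hIB (n+1) c) = 0 := by
      rw [map_add, bdry_chainMap hIB (n+1) n c, hc, hdB]
      abel
    refine ⟨⟨zA - chainMap hIA (n+1) c, AddMonoidHom.mem_ker.mpr hzA'⟩,
      ⟨zB + chainMap hIB (n+1) c, AddMonoidHom.mem_ker.mpr hzB'⟩, Subtype.ext ?_⟩
    show chainMap hAU (n+1) (zA - chainMap hIA (n+1) c) +
      chainMap hBU (n+1) (zB + chainMap hIB (n+1) c) = (z : Chains U (n + 1))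
    rw [map_sub, map_add, chainMap_comp hIA hAU, chainMap_comp hIB hBU]
    have heq : chainMap (hIB.trans hBU) (n+1) c = chainMap (hIA.trans hAU) (n+1) c := rfl
    rw [heq, show chainMap hAU (n+1) zA - chainMap (hIA.trans hAU) (n+1) c +
      (chainMap hBU (n+1) zB + chainMap (hIA.trans hAU) (n+1) c) =
      chainMap hAU (n+1) zA + chainMap hBU (n+1) zB from by abel]
    exact hsplit



variable {S : Finset ℕ}

lemma restrict_simplexOn (ρ : Finset ℕ) (h : ρ ⊆ S) (J : Finset ℕ) :
    ((simplexOn ρ h).restrict J).faces = {τ : Finset ℕ | τ ⊆ ρ ∩ J} := by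
  ext τ
  constructor
  · rintro ⟨γ, hγ, rfl⟩
    exact Finset.inter_subset_inter hγ (subset_refl J)
  · intro hτ
    have hτ' : τ ⊆ ρ ∩ J := hτ
    exact ⟨τ, (Finset.subset_inter_iff.mp hτ').1,
      (Finset.inter_eq_left.mpr (Finset.subset_inter_iff.mp hτ').2).symm⟩

lemma effVerts_inter {K K1 K2 : SComplex S} {σ : Finset ℕ} (hK : IsFaceSum K K1 K2 σ) :
    effVerts K1 ∩ effVerts K2 = σ := by
  classical
  ext x
  simp only [Finset.mem_inter, effVerts, Finset.mem_filter]
  constructor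
  · rintro ⟨⟨hxS, h1⟩, ⟨-, h2⟩⟩
    have : ({x} : Finset ℕ) ∈ K1.faces ∩ K2.faces := ⟨h1, h2⟩
    rw [hK.inter] at this
    exact Finset.singleton_subset_iff.mp this
  · intro hx
    have hσS : σ ⊆ S := K1.faces_subset hK.mem1
    have h1 : ({x} : Finset ℕ) ∈ K1.faces :=
      K1.down_closed hK.mem1 (Finset.singleton_subset_iff.mpr hx)
    have h2 : ({x} : Finset ℕ) ∈ K2.faces :=
      K2.down_closed hK.mem2 (Finset.singleton_subset_iff.mpr hx)
    exact ⟨⟨hσS hx, h1⟩, ⟨hσS hx, h2⟩⟩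

/-- For a wedge-decomposable `K = K¹ ⊔_σ K²` on `[m]` with no
ghost vertices and `L = ⟨V(K¹)⟩ ⊔_σ ⟨V(K²)⟩`, for every non-empty `J ⊆ [m]` and
every `n ≥ 0` the sequence
`H̃_n(⟨σ⟩_J) →φ H̃_n(K¹_J) ⊕ H̃_n(K²_J) →ψ H̃_n(K_J) →Φ H̃_n(L_J) → 0`
is exact, where `φ(z) = (z̄, -z̄)`, `ψ(x,y) = x̄ + ȳ` (inclusion-induced maps), and
`Φ` is induced by the inclusion `K_J ↪ L_J`. -/
theorem exact_sequence_of_faceSum (m : ℕ) (K K1 K2 : SComplex (Finset.Icc 1 m))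
    (σ : Finset ℕ) (hK : IsFaceSum K K1 K2 σ) (hng : NoGhosts K)
    (J : Finset ℕ) (hJ : J ⊆ Finset.Icc 1 m) (hJne : J.Nonempty) (n : ℤ) (hn : 0 ≤ n) :
    Function.Exact
      ⇑((inducedRH (restrict_mono (fun τ hτ => K1.down_closed hK.mem1 hτ :
            (simplexOn σ (K1.faces_subset hK.mem1)).faces ⊆ K1.faces) J) n).prod
        (-(inducedRH (restrict_mono (fun τ hτ => K2.down_closed hK.mem2 hτ :
            (simplexOn σ (K1.faces_subset hK.mem1)).faces ⊆ K2.faces) J) n)))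
      ⇑((inducedRH (restrict_mono hK.le1 J) n).coprod (inducedRH (restrict_mono hK.le2 J) n)) ∧
    Function.Exact
      ⇑((inducedRH (restrict_mono hK.le1 J) n).coprod (inducedRH (restrict_mono hK.le2 J) n))
      ⇑(inducedRH (restrict_mono (le_wedgeL hK) J) n) ∧
    Function.Surjective ⇑(inducedRH (restrict_mono (le_wedgeL hK) J) n) := by
  classical
  -- complexes
  set A := K1.restrict J with hA_def
  set B := K2.restrict J with hB_def
  set U := K.restrict J with hU_def
  set Iσ := (simplexOn σ (K1.faces_subset hK.mem1)).restrict J with hI_def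
  set P1 := (simplexOn (effVerts K1) (effVerts_subset K1)).restrict J with hP1_def
  set P2 := (simplexOn (effVerts K2) (effVerts_subset K2)).restrict J with hP2_def
  set L := (wedgeL K1 K2).restrict J with hL_def
  -- subset proofs
  have hIA : Iσ.faces ⊆ A.faces := restrict_mono (fun τ hτ => K1.down_closed hK.mem1 hτ :
    (simplexOn σ (K1.faces_subset hK.mem1)).faces ⊆ K1.faces) J
  have hIB : Iσ.faces ⊆ B.faces := restrict_mono (fun τ hτ => K2.down_closed hK.mem2 hτ :
    (simplexOn σ (K1.faces_subset hK.mem1)).faces ⊆ K2.faces) J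
  have hAU : A.faces ⊆ U.faces := restrict_mono hK.le1 J
  have hBU : B.faces ⊆ U.faces := restrict_mono hK.le2 J
  have hUL : U.faces ⊆ L.faces := restrict_mono (le_wedgeL hK) J
  have hAP1 : A.faces ⊆ P1.faces :=
    restrict_mono (show K1.faces ⊆ (simplexOn (effVerts K1) (effVerts_subset K1)).faces
      from fun τ hτ => face_subset_effVerts K1 hτ) J
  have hBP2 : B.faces ⊆ P2.faces :=
    restrict_mono (show K2.faces ⊆ (simplexOn (effVerts K2) (effVerts_subset K2)).faces
      from fun τ hτ => face_subset_effVerts K2 hτ) J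
  have hP1L : P1.faces ⊆ L.faces :=
    restrict_mono (show (simplexOn (effVerts K1) (effVerts_subset K1)).faces ⊆
        (wedgeL K1 K2).faces
      from fun τ hτ => Set.mem_union_left _ hτ) J
  have hP2L : P2.faces ⊆ L.faces :=
    restrict_mono (show (simplexOn (effVerts K2) (effVerts_subset K2)).faces ⊆
        (wedgeL K1 K2).faces
      from fun τ hτ => Set.mem_union_right _ hτ) J
  have hUAB : U.faces ⊆ A.faces ∪ B.faces := by
    rintro τ ⟨α, hα, rfl⟩
    rw [hK.union] at hα
    rcases hα with h | h
    · exact Or.inl ⟨α, h, rfl⟩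
    · exact Or.inr ⟨α, h, rfl⟩
  have hLP12 : L.faces ⊆ P1.faces ∪ P2.faces := by
    rintro τ ⟨α, hα, rfl⟩
    have hα' : α ∈ (simplexOn (effVerts K1) (effVerts_subset K1)).faces ∪
        (simplexOn (effVerts K2) (effVerts_subset K2)).faces := hα
    rcases hα' with h | h
    · exact Or.inl ⟨α, h, rfl⟩
    · exact Or.inr ⟨α, h, rfl⟩
  have hIw : Iσ.faces = {τ : Finset ℕ | τ ⊆ σ ∩ J} :=
    restrict_simplexOn σ (K1.faces_subset hK.mem1) J
  have hP1faces : P1.faces = {τ : Finset ℕ | τ ⊆ effVerts K1 ∩ J} :=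
    restrict_simplexOn (effVerts K1) (effVerts_subset K1) J
  have hP2faces : P2.faces = {τ : Finset ℕ | τ ⊆ effVerts K2 ∩ J} :=
    restrict_simplexOn (effVerts K2) (effVerts_subset K2) J
  have heff : effVerts K1 ∩ effVerts K2 = σ := effVerts_inter hK
  have hABI : ∀ τ : Finset ℕ, τ ∈ A.faces → τ ∈ B.faces → τ ∈ Iσ.faces := by
    rintro τ ⟨α, hα, rfl⟩ hB'
    have h1 : α ∩ J ∈ K1.faces := K1.down_closed hα Finset.inter_subset_left
    obtain ⟨β, hβ, hbe⟩ := hB'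
    have h2 : α ∩ J ∈ K2.faces := by
      rw [hbe]; exact K2.down_closed hβ Finset.inter_subset_left
    have h3 : α ∩ J ⊆ σ := by
      have hmem : α ∩ J ∈ K1.faces ∩ K2.faces := ⟨h1, h2⟩
      rw [hK.inter] at hmem
      exact hmem
    rw [hIw]
    exact Finset.subset_inter h3 Finset.inter_subset_right
  have hIP1 : Iσ.faces ⊆ P1.faces := by
    intro τ hτ
    rw [hIw] at hτ
    rw [hP1faces]
    have hσ1 : σ ⊆ effVerts K1 := face_subset_effVerts K1 hK.mem1
    exact Set.mem_setOf_eq ▸ (hτ.trans (Finset.inter_subset_inter hσ1 (subset_refl J)))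
  have hIP2 : Iσ.faces ⊆ P2.faces := by
    intro τ hτ
    rw [hIw] at hτ
    rw [hP2faces]
    have hσ2 : σ ⊆ effVerts K2 := face_subset_effVerts K2 hK.mem2
    exact Set.mem_setOf_eq ▸ (hτ.trans (Finset.inter_subset_inter hσ2 (subset_refl J)))
  have hP12I : ∀ τ : Finset ℕ, τ ∈ P1.faces → τ ∈ P2.faces → τ ∈ Iσ.faces := by
    intro τ h1 h2
    rw [hP1faces] at h1
    rw [hP2faces] at h2
    rw [hIw]
    have : τ ⊆ (effVerts K1 ∩ effVerts K2) ∩ J := by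
      intro x hx
      have hx1 := h1 hx
      have hx2 := h2 hx
      simp only [Finset.mem_inter] at hx1 hx2 ⊢
      exact ⟨⟨hx1.1, hx2.1⟩, hx1.2⟩
    rw [heff] at this
    exact this
  -- no faces of Iσ in positive degrees when σ ∩ J = ∅
  refine ⟨?_, ?_, ?_⟩
  · -- Part 1: exactness at the middle of φ, ψ
    intro p
    constructor
    · intro h0
      obtain ⟨x, y⟩ := p
      obtain ⟨a, rfl⟩ := QuotientAddGroup.mk_surjective x
      obtain ⟨b, rfl⟩ := QuotientAddGroup.mk_surjective y
      simp only [AddMonoidHom.coprod_apply] at h0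
      rw [inducedRH_mk, inducedRH_mk, ← QuotientAddGroup.mk_add, RH_mk_eq_zero_iff] at h0
      obtain ⟨u, hu⟩ := h0
      rw [AddSubgroup.coe_add, cycleMap_val, cycleMap_val] at hu
      obtain ⟨uA, uB, husplit⟩ := chains_split hAU hBU hUAB (n + 2) u
      set a' := (a : Chains A (n + 1)) - bdry A (n + 2) (n + 1) uA with ha'_def
      set b' := (b : Chains B (n + 1)) - bdry B (n + 2) (n + 1) uB with hb'_def
      have hsum0 : chainMap hAU (n + 1) a' + chainMap hBU (n + 1) b' = 0 := by
        rw [ha'_def, hb'_def, map_sub, map_sub, ← bdry_chainMap hAU, ← bdry_chainMap hBU,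
          sub_add_sub_comm, ← map_add, husplit, hu, sub_self]
      obtain ⟨c, hcA, hcB⟩ := chains_ker hAU hBU hIA hIB hABI (n + 1) a' b' hsum0
      have hccyc : bdry Iσ (n + 1) n c = 0 := by
        apply chainMap_injective hIA n
        rw [map_zero, ← bdry_chainMap hIA (n + 1) n c, hcA, ha'_def, map_sub,
          cycles_bdry_eq_zero a, bdry_bdry A (n + 2) (n + 1) n (by ring) (by ring),
          sub_self]
      refine ⟨QuotientAddGroup.mk ⟨c, AddMonoidHom.mem_ker.mpr hccyc⟩, ?_⟩
      have h1 : inducedRH hIA n (QuotientAddGroup.mk ⟨c, AddMonoidHom.mem_ker.mpr hccyc⟩) =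
          QuotientAddGroup.mk a := by
        rw [inducedRH_mk]
        apply RH_mk_eq_mk _ _ (-uA)
        rw [map_neg, cycleMap_val]
        show -(bdry A (n + 2) (n + 1) uA) = chainMap hIA (n + 1) c - (a : Chains A (n + 1))
        rw [hcA, ha'_def]
        abel
      have h2 : -(inducedRH hIB n
          (QuotientAddGroup.mk ⟨c, AddMonoidHom.mem_ker.mpr hccyc⟩)) =
          QuotientAddGroup.mk b := by
        rw [inducedRH_mk, ← QuotientAddGroup.mk_neg]
        apply RH_mk_eq_mk _ _ (-uB)
        rw [map_neg]
        show -(bdry B (n + 2) (n + 1) uB) =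
          -(chainMap hIB (n + 1) c) - (b : Chains B (n + 1))
        rw [hcB, hb'_def]
        abel
      simp only [AddMonoidHom.prod_apply, AddMonoidHom.neg_apply, Prod.mk.injEq]
      exact ⟨h1, h2⟩
    · rintro ⟨q, rfl⟩
      obtain ⟨cq, rfl⟩ := QuotientAddGroup.mk_surjective q
      simp only [AddMonoidHom.prod_apply, AddMonoidHom.neg_apply, AddMonoidHom.coprod_apply]
      rw [map_neg, inducedRH_comp, inducedRH_comp, add_neg_eq_zero]
  · -- Part 2: exactness at RH U
    intro x
    constructor
    · intro h0
      obtain ⟨z, rfl⟩ := QuotientAddGroup.mk_surjective x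
      by_cases hcase : (σ ∩ J).Nonempty ∨ 1 ≤ n
      · obtain ⟨a, b, hab⟩ :=
          cycles_split hAU hBU hIA hIB hUAB hABI (σ ∩ J) hIw n hcase z
        refine ⟨(QuotientAddGroup.mk a, QuotientAddGroup.mk b), ?_⟩
        simp only [AddMonoidHom.coprod_apply]
        rw [inducedRH_mk, inducedRH_mk, ← QuotientAddGroup.mk_add, hab]
      · push_neg at hcase
        have hw0 : σ ∩ J = ∅ := hcase.1
        have hn0 : n = 0 := by have := hcase.2; omega
        rw [inducedRH_mk, RH_mk_eq_zero_iff] at h0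
        obtain ⟨u, hu⟩ := h0
        rw [cycleMap_val] at hu
        obtain ⟨zA, zB, hsplit⟩ := chains_split hAU hBU hUAB (n + 1) (z : Chains U (n + 1))
        obtain ⟨w1, w2, hwsplit⟩ := chains_split hP1L hP2L hLP12 (n + 2) u
        set α := chainMap hAP1 (n + 1) zA - bdry P1 (n + 2) (n + 1) w1 with hα_def
        set β := chainMap hBP2 (n + 1) zB - bdry P2 (n + 2) (n + 1) w2 with hβ_def
        have hαβ : chainMap hP1L (n + 1) α + chainMap hP2L (n + 1) β = 0 := by
          rw [hα_def, hβ_def, map_sub, map_sub, chainMap_comp hAP1 hP1L,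
            chainMap_comp hBP2 hP2L, ← bdry_chainMap hP1L, ← bdry_chainMap hP2L,
            sub_add_sub_comm, ← map_add, hwsplit, hu, sub_eq_zero, ← hsplit, map_add,
            chainMap_comp hAU hUL, chainMap_comp hBU hUL]
        obtain ⟨c, hc1, hc2⟩ := chains_ker hP1L hP2L hIP1 hIP2 hP12I (n + 1) α β hαβ
        have hc0 : c = 0 := by
          ext t
          exfalso
          obtain ⟨s, hsf, hsc⟩ := t
          rw [hIw, hw0] at hsf
          have hse : s = ∅ := Finset.subset_empty.mp hsf
          rw [hse] at hsc
          simp at hsc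
          omega
        rw [hc0, map_zero] at hc1 hc2
        have hα0 : chainMap hAP1 (n + 1) zA = bdry P1 (n + 2) (n + 1) w1 :=
          sub_eq_zero.mp hc1.symm
        have hβ0 : chainMap hBP2 (n + 1) zB = bdry P2 (n + 2) (n + 1) w2 := by
          have : β = 0 := by
            have h2 := hc2.symm
            rw [neg_eq_zero] at h2
            exact h2
          exact sub_eq_zero.mp this
        have hzA : bdry A (n + 1) n zA = 0 := by
          apply chainMap_injective hAP1 n
          rw [map_zero, ← bdry_chainMap hAP1 (n + 1) n zA, hα0,
            bdry_bdry P1 (n + 2) (n + 1) n (by ring) (by ring)]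
        have hzB : bdry B (n + 1) n zB = 0 := by
          apply chainMap_injective hBP2 n
          rw [map_zero, ← bdry_chainMap hBP2 (n + 1) n zB, hβ0,
            bdry_bdry P2 (n + 2) (n + 1) n (by ring) (by ring)]
        refine ⟨(QuotientAddGroup.mk ⟨zA, AddMonoidHom.mem_ker.mpr hzA⟩,
          QuotientAddGroup.mk ⟨zB, AddMonoidHom.mem_ker.mpr hzB⟩), ?_⟩
        simp only [AddMonoidHom.coprod_apply]
        rw [inducedRH_mk, inducedRH_mk, ← QuotientAddGroup.mk_add]
        congr 1
        refine Subtype.ext ?_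
        show chainMap hAU (n + 1) zA + chainMap hBU (n + 1) zB = (z : Chains U (n + 1))
        exact hsplit
    · rintro ⟨⟨p1, p2⟩, rfl⟩
      obtain ⟨a, rfl⟩ := QuotientAddGroup.mk_surjective p1
      obtain ⟨b, rfl⟩ := QuotientAddGroup.mk_surjective p2
      simp only [AddMonoidHom.coprod_apply]
      rw [map_add, inducedRH_comp, inducedRH_comp]
      have hA0 : inducedRH ((restrict_mono hK.le1 J).trans
          (restrict_mono (le_wedgeL hK) J)) n (QuotientAddGroup.mk a) = 0 := by
        have h1 : inducedRH hAP1 n (QuotientAddGroup.mk a) = 0 :=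
          RH_trivial_of_simplex P1 (effVerts K1 ∩ J) hP1faces n hn _
        rw [show inducedRH ((restrict_mono hK.le1 J).trans
            (restrict_mono (le_wedgeL hK) J)) n (QuotientAddGroup.mk a) =
          inducedRH (hAP1.trans hP1L) n (QuotientAddGroup.mk a) from rfl]
        rw [← inducedRH_comp hAP1 hP1L, h1, map_zero]
      have hB0 : inducedRH ((restrict_mono hK.le2 J).trans
          (restrict_mono (le_wedgeL hK) J)) n (QuotientAddGroup.mk b) = 0 := by
        have h1 : inducedRH hBP2 n (QuotientAddGroup.mk b) = 0 :=
          RH_trivial_of_simplex P2 (effVerts K2 ∩ J) hP2faces n hn _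
        rw [show inducedRH ((restrict_mono hK.le2 J).trans
            (restrict_mono (le_wedgeL hK) J)) n (QuotientAddGroup.mk b) =
          inducedRH (hBP2.trans hP2L) n (QuotientAddGroup.mk b) from rfl]
        rw [← inducedRH_comp hBP2 hP2L, h1, map_zero]
      rw [hA0, hB0, add_zero]
  · -- Part 3: surjectivity
    intro y
    obtain ⟨z, rfl⟩ := QuotientAddGroup.mk_surjective y
    rcases (by omega : n = 0 ∨ 1 ≤ n) with hn0 | hn1
    · -- degree 0: all vertices of L_J are vertices of K_J
      have hface : ∀ t : Face L (n + 1), t.1 ∈ U.faces := by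
        rintro ⟨s, hsf, hsc⟩
        obtain ⟨αf, hαf, hseq⟩ := hsf
        have hsJ : s ⊆ J := by rw [hseq]; exact Finset.inter_subset_right
        have hcard1 : s.card = 1 := by omega
        obtain ⟨x, hx⟩ := Finset.card_eq_one.mp hcard1
        have hxJ : x ∈ J := hsJ (hx ▸ Finset.mem_singleton_self x)
        have hxS : x ∈ Finset.Icc 1 m := hJ hxJ
        have hK1 : ({x} : Finset ℕ) ∈ K.faces := hng x hxS
        refine ⟨{x}, hK1, ?_⟩
        show s = {x} ∩ J
        rw [hx]
        exact (Finset.inter_eq_left.mpr (Finset.singleton_subset_iff.mpr hxJ)).symm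
      set fUL : Face U (n + 1) → Face L (n + 1) :=
        fun τ => ⟨τ.1, hUL τ.2.1, τ.2.2⟩ with hfUL_def
      have hinj : Function.Injective fUL :=
        fun x y hxy => Subtype.ext (Subtype.mk_eq_mk.mp hxy)
      set z' := Finsupp.comapDomain fUL (z : Chains L (n + 1)) (hinj.injOn) with hz'_def
      have hmapz : chainMap hUL (n + 1) z' = (z : Chains L (n + 1)) := by
        show Finsupp.mapDomain fUL _ = _
        refine Finsupp.mapDomain_comapDomain fUL hinj _ ?_
        intro t _
        exact ⟨⟨t.1, hface t, t.2.2⟩, Subtype.ext rfl⟩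
      have hz'cyc : bdry U (n + 1) n z' = 0 := by
        apply chainMap_injective hUL n
        rw [map_zero, ← bdry_chainMap hUL, hmapz, cycles_bdry_eq_zero z]
      refine ⟨QuotientAddGroup.mk ⟨z', AddMonoidHom.mem_ker.mpr hz'cyc⟩, ?_⟩
      rw [inducedRH_mk]
      congr 1
      exact Subtype.ext hmapz
    · -- degree ≥ 1: RH L n is trivial
      have htriv : (QuotientAddGroup.mk z : RH L n) = 0 := by
        obtain ⟨a, b, hab⟩ :=
          cycles_split hP1L hP2L hIP1 hIP2 hLP12 hP12I (σ ∩ J) hIw n (Or.inr hn1) z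
        have h1 : (QuotientAddGroup.mk a : RH P1 n) = 0 :=
          RH_trivial_of_simplex P1 (effVerts K1 ∩ J) hP1faces n hn _
        have h2 : (QuotientAddGroup.mk b : RH P2 n) = 0 :=
          RH_trivial_of_simplex P2 (effVerts K2 ∩ J) hP2faces n hn _
        calc (QuotientAddGroup.mk z : RH L n)
            = inducedRH hP1L n (QuotientAddGroup.mk a) +
              inducedRH hP2L n (QuotientAddGroup.mk b) := by
              rw [inducedRH_mk, inducedRH_mk, ← QuotientAddGroup.mk_add, hab]
          _ = 0 := by rw [h1, h2, map_zero, map_zero, add_zero]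
      exact ⟨0, by rw [map_zero, htriv]⟩


end DH
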